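/- The degree-three discrete-time stability region is the image of the open unit cube (-1,1)³ under the multiaffine map f(k) = (k₂k₃ + k₁(1+k₂), k₂ + k₁k₃(1+k₂), k₃): for every k ∈ (-1,1)³, the polynomial z³ + f₁(k)z² + f₂(k)z + f₃(k) has all roots in the open unit disk. -/

import Mathlib

set_option maxHeartbeats 1000000

private lemma normSq_diff (a b : ℂ) (c : ℝ) :
    Complex.normSq (a + c * b) - Complex.normSq (b + c * a)
      = (1 - c ^ 2) * (Complex.normSq a - Complex.normSq b) := by
  simp [Complex.normSq_apply, Complex.add_re, Complex.add_im, Complex.mul_re,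
    Complex.mul_im]
  ring

private lemma norm_add_lower (x y : ℂ) : ‖x‖ - ‖y‖ ≤ ‖x + y‖ := by
  have h := norm_sub_norm_le x (-y)
  simpa [sub_neg_eq_add] using h

/-- Stability of the image of the open unit cube under the multiaffine map
`f(k) = (k₂k₃ + k₁(1+k₂), k₂ + k₁k₃(1+k₂), k₃)`: if `‖k‖_∞ < 1` then all
complex roots of `z³ + f₁(k)z² + f₂(k)z + f₃(k)` have modulus `< 1`. -/
theorem multiaffine_image_stable
    (k : Fin 3 → ℝ) (hk : ∀ i, |k i| < 1) :
    ∀ z : ℂ,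
      z ^ 3 + ((k 1 * k 2 + k 0 * (1 + k 1) : ℝ) : ℂ) * z ^ 2
        + ((k 1 + k 0 * k 2 * (1 + k 1) : ℝ) : ℂ) * z + ((k 2 : ℝ) : ℂ) = 0 →
      ‖z‖ < 1 := by
  intro z hzeq
  by_contra hcon
  push_neg at hcon
  have hz1 : (1 : ℝ) ≤ ‖z‖ := by exact hcon
  have hk0 := hk 0
  have hk1 := hk 1
  have hk2 := hk 2
  set c0 : ℂ := ((k 0 : ℝ) : ℂ) with hc0
  set c1 : ℂ := ((k 1 : ℝ) : ℂ) with hc1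
  set c2 : ℂ := ((k 2 : ℝ) : ℂ) with hc2
  -- Levinson/Schur recursion polynomials evaluated at z
  set P1 : ℂ := z + c0 * 1 with hP1def
  set P1s : ℂ := 1 + c0 * z with hP1sdef
  set P2 : ℂ := z * P1 + c1 * P1s with hP2def
  set P2s : ℂ := P1s + c1 * (z * P1) with hP2sdef
  set P3 : ℂ := z * P2 + c2 * P2s with hP3def
  -- the cubic equals P3
  have hfact : z ^ 3 + ((k 1 * k 2 + k 0 * (1 + k 1) : ℝ) : ℂ) * z ^ 2
        + ((k 1 + k 0 * k 2 * (1 + k 1) : ℝ) : ℂ) * z + ((k 2 : ℝ) : ℂ) = P3 := by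
    simp only [hP3def, hP2def, hP2sdef, hP1def, hP1sdef]
    push_cast
    ring
  have hP3zero : P3 = 0 := by rw [← hfact]; exact hzeq
  -- norms of the real coefficients
  have hnc0 : ‖c0‖ = |k 0| := by simp [hc0]
  have hnc1 : ‖c1‖ = |k 1| := by simp [hc1]
  have hnc2 : ‖c2‖ = |k 2| := by simp [hc2]
  have hnzsq : (1 : ℝ) ≤ Complex.normSq z := by
    have : ‖z‖ ^ 2 = Complex.normSq z := by
      rw [Complex.sq_norm]
    nlinarith
  -- step 1
  have h1diff : Complex.normSq P1 - Complex.normSq P1s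
      = (1 - (k 0) ^ 2) * (Complex.normSq z - 1) := by
    have := normSq_diff z 1 (k 0)
    simpa [hP1def, hP1sdef, hc0] using this
  have hk0sq : (k 0) ^ 2 < 1 := by nlinarith [abs_nonneg (k 0), le_abs_self (k 0), neg_abs_le (k 0)]
  have h1s : ‖P1s‖ ≤ ‖P1‖ := by
    have e1 : ‖P1‖ ^ 2 = Complex.normSq P1 := by rw [Complex.sq_norm]
    have e2 : ‖P1s‖ ^ 2 = Complex.normSq P1s := by rw [Complex.sq_norm]
    nlinarith [norm_nonneg P1, norm_nonneg P1s]
  have hP1pos : (1 - |k 0|) ≤ ‖P1‖ := by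
    have := norm_add_lower z (c0 * 1)
    have hn : ‖c0 * 1‖ = |k 0| := by simp [hc0]
    rw [hn] at this
    linarith [this, hz1]
  have hP1pos' : 0 < ‖P1‖ := by linarith
  -- step 2
  have hzP1 : ‖z * P1‖ = ‖z‖ * ‖P1‖ := norm_mul z P1
  have hP2low : (1 - |k 1|) * ‖P1‖ ≤ ‖P2‖ := by
    have h := norm_add_lower (z * P1) (c1 * P1s)
    have hn : ‖c1 * P1s‖ = |k 1| * ‖P1s‖ := by rw [norm_mul, hnc1]
    rw [hzP1, hn] at h
    have h2 : ‖P1‖ ≤ ‖z‖ * ‖P1‖ := by nlinarith [norm_nonneg P1]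
    have h3 : |k 1| * ‖P1s‖ ≤ |k 1| * ‖P1‖ := by
      apply mul_le_mul_of_nonneg_left h1s (abs_nonneg _)
    rw [hP2def]
    nlinarith
  have hP2pos : 0 < ‖P2‖ := by nlinarith
  have hnzP1sq : Complex.normSq (z * P1) = Complex.normSq z * Complex.normSq P1 := by
    simp [Complex.normSq_mul]
  have h2diff : Complex.normSq P2 - Complex.normSq P2s
      = (1 - (k 1) ^ 2) * (Complex.normSq (z * P1) - Complex.normSq P1s) := by
    have := normSq_diff (z * P1) P1s (k 1)
    simpa [hP2def, hP2sdef, hc1] using this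
  have hk1sq : (k 1) ^ 2 < 1 := by nlinarith [abs_nonneg (k 1), le_abs_self (k 1), neg_abs_le (k 1)]
  have h2s : ‖P2s‖ ≤ ‖P2‖ := by
    have e1 : ‖P2‖ ^ 2 = Complex.normSq P2 := by rw [Complex.sq_norm]
    have e2 : ‖P2s‖ ^ 2 = Complex.normSq P2s := by rw [Complex.sq_norm]
    have e3 : ‖P1‖ ^ 2 = Complex.normSq P1 := by rw [Complex.sq_norm]
    have e4 : ‖P1s‖ ^ 2 = Complex.normSq P1s := by rw [Complex.sq_norm]
    have h5 : Complex.normSq P1s ≤ Complex.normSq P1 := by nlinarith [norm_nonneg P1, norm_nonneg P1s]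
    have h6 : Complex.normSq P1 ≤ Complex.normSq (z * P1) := by
      rw [hnzP1sq]; nlinarith [Complex.normSq_nonneg P1]
    nlinarith [norm_nonneg P2, norm_nonneg P2s]
  -- step 3: P3 ≠ 0
  have hP3low : (1 - |k 2|) * ‖P2‖ ≤ ‖P3‖ := by
    have h := norm_add_lower (z * P2) (c2 * P2s)
    have hn : ‖c2 * P2s‖ = |k 2| * ‖P2s‖ := by rw [norm_mul, hnc2]
    have hzP2 : ‖z * P2‖ = ‖z‖ * ‖P2‖ := norm_mul z P2
    rw [hzP2, hn] at h
    have h2 : ‖P2‖ ≤ ‖z‖ * ‖P2‖ := by nlinarith [norm_nonneg P2]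
    have h3 : |k 2| * ‖P2s‖ ≤ |k 2| * ‖P2‖ := by
      apply mul_le_mul_of_nonneg_left h2s (abs_nonneg _)
    rw [hP3def]
    nlinarith
  have : 0 < ‖P3‖ := by nlinarith
  rw [hP3zero] at this
  simp at this
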